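/- arXiv:math/0008214 — 5 statements merged into one kernel-verified Lean document; each statement's English description precedes it below -/
import Mathlib

section
/- If S : X → Set Y and T : Y → Set Z are linear relations with nonempty values such that S(0) and T(0) are finite-dimensional subspaces, then (T∘S)(0) is a finite-dimensional subspace of Z. -/
open Pointwise

/-- If `S` and `T` are linear relations whose values at `0` are finite-dimensional
subspaces, then `(T ∘ S) 0` is a finite-dimensional subspace. -/
theorem linearRelation_comp_zero_finiteDimensional
    {K X Y Z : Type*} [Field K] [AddCommGroup X] [Module K X] [AddCommGroup Y] [Module K Y]
    [AddCommGroup Z] [Module K Z]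
    (S : X → Set Y) (T : Y → Set Z)
    (hSne : ∀ x, (S x).Nonempty)
    (hSsmul : ∀ a : K, a ≠ 0 → ∀ x, S (a • x) = a • S x)
    (hSadd : ∀ x y, S (x + y) = S x + S y)
    (hTne : ∀ y, (T y).Nonempty)
    (hTsmul : ∀ a : K, a ≠ 0 → ∀ y, T (a • y) = a • T y)
    (hTadd : ∀ y y', T (y + y') = T y + T y')
    (hS0 : ∃ U : Submodule K Y, (U : Set Y) = S 0 ∧ FiniteDimensional K U)
    (hT0 : ∃ V : Submodule K Z, (V : Set Z) = T 0 ∧ FiniteDimensional K V) :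
    ∃ W : Submodule K Z, (W : Set Z) = (⋃ y ∈ S 0, T y) ∧ FiniteDimensional K W := by
  obtain ⟨U, hU, hUfd⟩ := hS0
  obtain ⟨V, hV, hVfd⟩ := hT0
  choose t ht using hTne
  -- difference of two elements of T y lies in V
  have hdiff : ∀ y (z z' : Z), z ∈ T y → z' ∈ T y → z - z' ∈ V := by
    intro y z z' hz hz'
    have h0 : T 0 = T y + T (-y) := by rw [← hTadd, add_neg_cancel]
    have hneg : T (-y) = (-1 : K) • T y := by
      rw [← hTsmul (-1) (by norm_num) y, neg_one_smul]
    rw [← SetLike.mem_coe, hV, h0, hneg]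
    have : z + (-1 : K) • z' ∈ T y + (-1 : K) • T y :=
      Set.add_mem_add hz (Set.smul_mem_smul_set hz')
    simpa [sub_eq_add_neg] using this
  -- T y + V = T y
  have habsorb : ∀ y (z z' : Z), z ∈ T y → z' ∈ V → z + z' ∈ T y := by
    intro y z z' hz hz'
    have : T y = T y + T 0 := by rw [← hTadd, add_zero]
    rw [this]
    exact Set.add_mem_add hz (by rw [← hV]; exact hz')
  -- finite spanning set of U
  obtain ⟨s, hs⟩ : U.FG := Module.Finite.iff_fg.mp inferInstance
  refine ⟨Submodule.span K (t '' ↑s) ⊔ V, ?_, ?_⟩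
  · ext z
    simp only [Set.mem_iUnion, exists_prop, SetLike.mem_coe]
    constructor
    · intro hz
      rw [Submodule.mem_sup] at hz
      obtain ⟨z₁, hz₁, z₂, hz₂, rfl⟩ := hz
      -- z₁ lies in some T y with y ∈ U
      have key : ∃ y ∈ U, z₁ ∈ T y := by
        clear hz₂
        induction hz₁ using Submodule.span_induction with
        | mem w hw =>
          obtain ⟨y, hy, rfl⟩ := hw
          exact ⟨y, hs ▸ Submodule.subset_span hy, ht y⟩
        | zero =>
          refine ⟨0, U.zero_mem, ?_⟩
          have : (0 : Z) ∈ V := V.zero_mem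
          rwa [← SetLike.mem_coe, hV] at this
        | add a b _ _ ha hb =>
          obtain ⟨y₁, hy₁, hz₁⟩ := ha
          obtain ⟨y₂, hy₂, hz₂⟩ := hb
          exact ⟨y₁ + y₂, U.add_mem hy₁ hy₂, by
            rw [hTadd]; exact Set.add_mem_add hz₁ hz₂⟩
        | smul c a _ hc =>
          obtain ⟨y, hy, hz⟩ := hc
          rcases eq_or_ne c 0 with rfl | hc0
          · refine ⟨0, U.zero_mem, ?_⟩
            have : (0 : Z) ∈ V := V.zero_mem
            rwa [← SetLike.mem_coe, hV, ← zero_smul K a] at this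
          · exact ⟨c • y, U.smul_mem c hy, by
              rw [hTsmul c hc0]; exact Set.smul_mem_smul_set hz⟩
      obtain ⟨y, hy, hz₁⟩ := key
      exact ⟨y, by rw [← hU]; exact hy, habsorb y _ _ hz₁ hz₂⟩
    · rintro ⟨y, hyS, hz⟩
      have hy : y ∈ U := by rw [← SetLike.mem_coe, hU]; exact hyS
      rw [← hs] at hy
      clear hyS
      induction hy using Submodule.span_induction generalizing z with
      | mem w hw =>
        have h1 : t w ∈ Submodule.span K (t '' ↑s) ⊔ V :=
          Submodule.mem_sup_left (Submodule.subset_span ⟨w, hw, rfl⟩)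
        have h2 : z - t w ∈ Submodule.span K (t '' ↑s) ⊔ V :=
          Submodule.mem_sup_right (hdiff w z (t w) hz (ht w))
        simpa using add_mem h1 h2
      | zero =>
        refine Submodule.mem_sup_right ?_
        rw [← SetLike.mem_coe, hV]
        exact hz
      | add a b ha' hb' iha ihb =>
        rw [hTadd] at hz
        obtain ⟨z₁, hz₁, z₂, hz₂, rfl⟩ := hz
        exact add_mem (iha z₁ hz₁) (ihb z₂ hz₂)
      | smul c a ha' ih =>
        rcases eq_or_ne c 0 with rfl | hc0
        · rw [zero_smul] at hz
          refine Submodule.mem_sup_right ?_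
          rw [← SetLike.mem_coe, hV]
          exact hz
        · rw [hTsmul c hc0] at hz
          obtain ⟨z', hz', rfl⟩ := hz
          exact Submodule.smul_mem _ c (ih z' hz')
  · have h1 : FiniteDimensional K (Submodule.span K (t '' ↑s)) :=
      FiniteDimensional.span_of_finite K ((s.finite_toSet.image t))
    exact Submodule.finiteDimensional_sup _ _
end

section
/- Let h and R be linear relations on Y such that R commutes with h (h∘R ⊆ R∘h) and h(0) ⊆ R(0). Then M = Fix(R) = {x : x ∈ R(x)} is h-weakly-invariant: for every x ∈ M, h(x) ∩ M ≠ ∅. -/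
open Pointwise

/-- If `R` commutes with `h` and `h 0 ⊆ R 0`, then `Fix(R)` is `h`-weakly-invariant. -/
theorem fix_weakly_invariant
    {K Y : Type*} [Field K] [AddCommGroup Y] [Module K Y]
    (h R : Y → Set Y)
    (hne : ∀ x, (h x).Nonempty)
    (hsmul : ∀ a : K, a ≠ 0 → ∀ x, h (a • x) = a • h x)
    (hadd : ∀ x y, h (x + y) = h x + h y)
    (hRne : ∀ x, (R x).Nonempty)
    (hRsmul : ∀ a : K, a ≠ 0 → ∀ x, R (a • x) = a • R x)
    (hRadd : ∀ x y, R (x + y) = R x + R y)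
    (hcomm : ∀ x, (⋃ y ∈ R x, h y) ⊆ ⋃ y ∈ h x, R y)
    (h0 : h 0 ⊆ R 0) :
    ∀ x ∈ {x | x ∈ R x}, (h x ∩ {x | x ∈ R x}).Nonempty := by
  intro x hx
  obtain ⟨w, hw⟩ := hne x
  have hwmem : w ∈ ⋃ y ∈ R x, h y := Set.mem_biUnion hx hw
  obtain ⟨y, hy, hwy⟩ := Set.mem_iUnion₂.1 (hcomm x hwmem)
  -- y ∈ h x, w ∈ R y. Show y ∈ R y.
  have hneg : h (-x) = (-1 : K) • h x := by
    rw [← hsmul (-1 : K) (by norm_num) x, neg_one_smul]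
  have hu : y - w ∈ h 0 := by
    have h0eq : h 0 = h x + h (-x) := by rw [← hadd, add_neg_cancel]
    rw [h0eq, hneg]
    have : -w ∈ (-1 : K) • h x := by
      simpa using Set.smul_mem_smul_set (a := (-1 : K)) hw
    simpa [sub_eq_add_neg] using Set.add_mem_add hy this
  have huR : y - w ∈ R 0 := h0 hu
  have : w + (y - w) ∈ R y := by
    have := Set.add_mem_add hwy huR
    rwa [← hRadd, add_zero] at this
  refine ⟨y, hy, ?_⟩
  simpa using this
end

section
/- Every linear relation h with nonempty values on a finite-dimensional complex vector space E whose value h(0) is (automatically) a subspace has an eigenvector: there exist λ ∈ ℂ and u ≠ 0 with λ•u ∈ h(u). -/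
open Pointwise

/-- Every linear relation with nonempty values on a nonzero finite-dimensional complex
vector space has an eigenvector. -/
theorem linearRelation_exists_eigenvector
    {E : Type*} [AddCommGroup E] [Module ℂ E] [FiniteDimensional ℂ E] [Nontrivial E]
    (h : E → Set E) (hne : ∀ x, (h x).Nonempty)
    (hsmul : ∀ a : ℂ, a ≠ 0 → ∀ x, h (a • x) = a • h x)
    (hadd : ∀ x y, h (x + y) = h x + h y) :
    ∃ (l : ℂ) (u : E), u ≠ 0 ∧ l • u ∈ h u := by
  classical
  obtain ⟨y0, hy0⟩ := hne 0
  have hneg : ∀ x, h (-x) = -h x := by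
    intro x
    have := hsmul (-1) (by norm_num) x
    simpa [neg_one_smul] using this
  have h00 : (0:E) ∈ h 0 := by
    have h1 : -y0 ∈ h 0 := by
      rw [← neg_zero, hneg 0]
      exact Set.neg_mem_neg.mpr hy0
    have h2 := hadd 0 0
    rw [add_zero] at h2
    rw [h2]
    simpa using Set.add_mem_add hy0 h1
  have hmemadd : ∀ x (y d : E), y ∈ h x → d ∈ h 0 → y + d ∈ h x := by
    intro x y d hy hd
    have h2 := hadd x 0
    rw [add_zero] at h2
    rw [h2]
    exact Set.add_mem_add hy hd
  have hdiff : ∀ x (y y' : E), y ∈ h x → y' ∈ h x → y - y' ∈ h 0 := by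
    intro x y y' hy hy'
    have h1 : -y' ∈ h (-x) := by rw [hneg]; exact Set.neg_mem_neg.mpr hy'
    have h2 : y + (-y') ∈ h x + h (-x) := Set.add_mem_add hy h1
    rw [← hadd, add_neg_cancel] at h2
    simpa [sub_eq_add_neg] using h2
  let S : Submodule ℂ E :=
  { carrier := h 0
    add_mem' := fun {a b} ha hb => by
      have h2 := Set.add_mem_add ha hb
      rwa [← hadd, add_zero] at h2
    zero_mem' := h00
    smul_mem' := fun c a ha => by
      rcases eq_or_ne c 0 with rfl | hc
      · simpa using h00
      · have h2 := hsmul c hc 0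
        rw [smul_zero] at h2
        have h3 : c • a ∈ c • h 0 := Set.smul_mem_smul_set ha
        rwa [← h2] at h3 }
  set s : E → E := fun x => (hne x).choose with hs
  have hsmem : ∀ x, s x ∈ h x := fun x => (hne x).choose_spec
  have key : ∀ x y, y ∈ h x → S.mkQ y = S.mkQ (s x) := by
    intro x y hy
    rw [Submodule.mkQ_apply, Submodule.mkQ_apply, Submodule.Quotient.eq]
    exact hdiff x y (s x) hy (hsmem x)
  let f : E →ₗ[ℂ] E ⧸ S :=
  { toFun := fun x => S.mkQ (s x)
    map_add' := fun x y => by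
      have hmem : s x + s y ∈ h (x + y) := by
        rw [hadd]; exact Set.add_mem_add (hsmem x) (hsmem y)
      show S.mkQ (s (x + y)) = S.mkQ (s x) + S.mkQ (s y)
      rw [← key (x + y) (s x + s y) hmem, map_add]
    map_smul' := fun c x => by
      show S.mkQ (s (c • x)) = c • S.mkQ (s x)
      rcases eq_or_ne c 0 with rfl | hc
      · simp only [zero_smul]
        rw [Submodule.mkQ_apply, (Submodule.Quotient.mk_eq_zero S).mpr (hsmem 0)]
      · have hmem : c • s x ∈ h (c • x) := by
          rw [hsmul c hc]; exact Set.smul_mem_smul_set (hsmem x)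
        rw [← key (c • x) (c • s x) hmem, map_smul] }
  rcases eq_or_ne S ⊤ with hS | hS
  · obtain ⟨u, hu⟩ := exists_ne (0 : E)
    refine ⟨0, u, hu, ?_⟩
    rw [zero_smul]
    have hm : -(s u) ∈ h 0 := by
      have : -(s u) ∈ S := by rw [hS]; trivial
      exact this
    have h2 := hmemadd u (s u) (-(s u)) (hsmem u) hm
    simpa using h2
  · have hnt : Nontrivial (E ⧸ S) :=
      Submodule.Quotient.nontrivial_iff.mpr hS
    obtain ⟨σ, hσ⟩ := S.mkQ.exists_rightInverse_of_surjective (by rw [Submodule.range_mkQ])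
    let T : Module.End ℂ (E ⧸ S) := f ∘ₗ σ
    obtain ⟨μ, hμ⟩ := Module.End.exists_eigenvalue T
    obtain ⟨w, hw⟩ := hμ.exists_hasEigenvector
    have hπσ : S.mkQ (σ w) = w := LinearMap.congr_fun hσ w
    refine ⟨μ, σ w, ?_, ?_⟩
    · intro h0
      apply hw.2
      rw [← hπσ, h0, map_zero]
    · have hT : f (σ w) = μ • w := hw.apply_eq_smul
      have hq : S.mkQ (μ • σ w) = S.mkQ (s (σ w)) := by
        rw [map_smul, hπσ, ← hT]
        rfl
      rw [Submodule.mkQ_apply, Submodule.mkQ_apply, Submodule.Quotient.eq] at hq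
      have hm : μ • σ w - s (σ w) ∈ h 0 := hq
      have h2 := hmemadd (σ w) (s (σ w)) (μ • σ w - s (σ w)) (hsmem (σ w)) hm
      simpa using h2
end

section
/- Let Y be a normed space and T : X → Set Y a linear relation with nonempty values such that T(0) is finite dimensional. If for every bounded B ⊆ X there exists a compact C ⊆ Y with T(B) ⊆ C + T(0), then the induced quotient operator Q_T ∘ T : X → Y/T(0) (which is single-valued and linear) is a compact operator, and conversely. -/
open Pointwise

/-- A linear relation `T` with finite-dimensional `T 0` is compact (in the sense that
every bounded set is mapped into `C + T 0` with `C` compact) if and only if the induced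
single-valued quotient operator `Q_T ∘ T : X → Y ⧸ T 0` is a compact operator. -/
theorem linearRelation_compact_iff_quotient_compact
    {X Y : Type*} [NormedAddCommGroup X] [NormedSpace ℂ X]
    [NormedAddCommGroup Y] [NormedSpace ℂ Y]
    (T : X → Set Y) (hne : ∀ x, (T x).Nonempty)
    (hsmul : ∀ a : ℂ, a ≠ 0 → ∀ x, T (a • x) = a • T x)
    (hadd : ∀ x y, T (x + y) = T x + T y)
    (W : Submodule ℂ Y) (hW : (W : Set Y) = T 0) (hWfin : FiniteDimensional ℂ W)
    (t : X →ₗ[ℂ] Y ⧸ W)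
    (ht : ∀ x, ∀ y ∈ T x, Submodule.Quotient.mk y = t x) :
    (∀ B : Set X, Bornology.IsBounded B →
        ∃ C : Set Y, IsCompact C ∧ (⋃ x ∈ B, T x) ⊆ C + (W : Set Y)) ↔
    (∀ B : Set X, Bornology.IsBounded B →
        ∃ C : Set (Y ⧸ W), IsCompact C ∧ t '' B ⊆ C) := by
  have hmk_cont : Continuous (Submodule.Quotient.mk (p := W)) := continuous_quot_mk
  constructor
  · intro h B hB
    obtain ⟨C, hC, hsub⟩ := h B hB
    refine ⟨Submodule.Quotient.mk '' C, hC.image hmk_cont, ?_⟩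
    rintro _ ⟨x, hx, rfl⟩
    obtain ⟨y, hy⟩ := hne x
    have hyC : y ∈ C + (W : Set Y) := hsub (Set.mem_biUnion hx hy)
    obtain ⟨c, hc, w, hw, rfl⟩ := hyC
    have : (Submodule.Quotient.mk (c + w) : Y ⧸ W) = Submodule.Quotient.mk c := by
      rw [Submodule.Quotient.mk_add]
      have : (Submodule.Quotient.mk w : Y ⧸ W) = 0 :=
        (Submodule.Quotient.mk_eq_zero W).mpr hw
      rw [this, add_zero]
    rw [← ht x _ hy, this]
    exact ⟨c, hc, rfl⟩
  · intro h B hB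
    obtain ⟨C, hC, hsub⟩ := h B hB
    obtain ⟨p, hp⟩ := Submodule.ClosedComplemented.of_finiteDimensional W
    set f : Y →L[ℂ] Y := ContinuousLinearMap.id ℂ Y - W.subtypeL.comp p with hf
    have hker : W ≤ LinearMap.ker (f : Y →ₗ[ℂ] Y) := by
      intro w hw
      simp only [LinearMap.mem_ker, ContinuousLinearMap.coe_coe, hf,
        ContinuousLinearMap.sub_apply, ContinuousLinearMap.id_apply,
        ContinuousLinearMap.comp_apply, Submodule.subtypeL_apply]
      have := hp ⟨w, hw⟩
      rw [this]
      simp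
    set s : Y ⧸ W →ₗ[ℂ] Y := W.liftQ (f : Y →ₗ[ℂ] Y) hker with hs
    have hs_mk : ∀ y : Y, s (Submodule.Quotient.mk y) = f y := fun y => rfl
    have hs_cont : Continuous s := by
      rw [W.isQuotientMap_mkQ.continuous_iff]
      exact f.continuous
    have hsec : ∀ y : Y, (Submodule.Quotient.mk (s (Submodule.Quotient.mk y)) : Y ⧸ W)
        = Submodule.Quotient.mk y := by
      intro y
      rw [hs_mk]
      have : f y = y - (p y : Y) := rfl
      rw [this, Submodule.Quotient.mk_sub]
      have : (Submodule.Quotient.mk ((p y : Y)) : Y ⧸ W) = 0 :=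
        (Submodule.Quotient.mk_eq_zero W).mpr (p y).2
      rw [this, sub_zero]
    refine ⟨s '' C, hC.image hs_cont, ?_⟩
    rintro y hy
    obtain ⟨x, hx, hyx⟩ := Set.mem_iUnion₂.mp hy
    have htx : t x ∈ C := hsub ⟨x, hx, rfl⟩
    have hmk : (Submodule.Quotient.mk y : Y ⧸ W) = t x := ht x y hyx
    refine ⟨s (t x), ⟨t x, htx, rfl⟩, y - s (t x), ?_, add_sub_cancel _ _⟩
    show y - s (t x) ∈ W
    rw [← Submodule.Quotient.mk_eq_zero W, Submodule.Quotient.mk_sub, hmk, ← hmk, hsec, hmk,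
      sub_self]
end

section
/- Let R : Y → Set Y be a linear relation on a normed space with R(0) finite-dimensional, and suppose R is compact: for every bounded B there is a compact C with R(B) ⊆ C + R(0). If M = Fix(R) = {x : x ∈ R(x)} is a subspace contained in its own image under R pointwise (x ∈ R(x) for x ∈ M), then M is finite-dimensional. -/
open Pointwise Metric

/-- If `R` is a compact linear relation on a normed space with `R 0` finite dimensional,
then the fixed-point subspace `Fix(R) = {x | x ∈ R x}` is finite dimensional. -/
theorem fix_of_compact_relation_finiteDimensional
    {Y : Type*} [NormedAddCommGroup Y] [NormedSpace ℂ Y]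
    (R : Y → Set Y) (hne : ∀ x, (R x).Nonempty)
    (hsmul : ∀ a : ℂ, a ≠ 0 → ∀ x, R (a • x) = a • R x)
    (hadd : ∀ x y, R (x + y) = R x + R y)
    (hR0 : ∃ W : Submodule ℂ Y, (W : Set Y) = R 0 ∧ FiniteDimensional ℂ W)
    (hcompact : ∀ B : Set Y, Bornology.IsBounded B →
      ∃ C : Set Y, IsCompact C ∧ (⋃ x ∈ B, R x) ⊆ C + R 0) :
    ∃ M : Submodule ℂ Y, (M : Set Y) = {x | x ∈ R x} ∧ FiniteDimensional ℂ M := by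
  obtain ⟨W, hW, hWfd⟩ := hR0
  have h0 : (0 : Y) ∈ R 0 := by rw [← hW]; exact W.zero_mem
  -- M as a submodule
  set M : Submodule ℂ Y :=
    { carrier := {x | x ∈ R x}
      zero_mem' := h0
      add_mem' := by
        intro x y hx hy
        show x + y ∈ R (x + y)
        rw [hadd]
        exact Set.add_mem_add hx hy
      smul_mem' := by
        intro a x hx
        rcases eq_or_ne a 0 with rfl | ha
        · simpa using h0
        · show a • x ∈ R (a • x)
          rw [hsmul a ha]
          exact Set.smul_mem_smul_set hx } with hM
  refine ⟨M, rfl, ?_⟩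
  -- compact witness
  obtain ⟨C, hC, hCR⟩ := hcompact (closedBall 0 1) isBounded_closedBall
  obtain ⟨r0, hr0⟩ := hC.isBounded.subset_closedBall 0
  haveI : ProperSpace W := FiniteDimensional.proper ℂ W
  set D : Set Y := (W : Set Y) ∩ closedBall 0 (1 + r0) with hD
  have hDc : IsCompact D := by
    have : D = Subtype.val '' (closedBall (0 : W) (1 + r0)) := by
      ext y
      simp only [hD, Set.mem_inter_iff, Set.mem_image, mem_closedBall, dist_zero_right]
      constructor
      · rintro ⟨hy, hn⟩; exact ⟨⟨y, hy⟩, by simpa [Submodule.norm_coe] using hn, rfl⟩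
      · rintro ⟨⟨z, hz⟩, hn, rfl⟩
        exact ⟨hz, by simpa [Submodule.norm_coe] using hn⟩
    rw [this]
    exact ((isCompact_closedBall (0 : W) (1 + r0)).image continuous_subtype_val)
  set K : Set Y := C + D with hK
  have hKc : IsCompact K := hC.add hDc
  -- ball of M contained in K
  have hball : (M : Set Y) ∩ closedBall 0 1 ⊆ K := by
    rintro x ⟨hxM, hx1⟩
    have hxR : x ∈ R x := hxM
    have : x ∈ C + R 0 := hCR (Set.mem_biUnion hx1 hxR)
    obtain ⟨c, hc, w, hw, rfl⟩ := this
    refine Set.add_mem_add hc ⟨by rw [hW]; exact hw, ?_⟩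
    simp only [mem_closedBall, dist_zero_right]
    have hcn : ‖c‖ ≤ r0 := by simpa [dist_zero_right] using hr0 hc
    calc ‖w‖ = ‖(c + w) - c‖ := by rw [add_sub_cancel_left]
      _ ≤ ‖c + w‖ + ‖c‖ := norm_sub_le _ _
      _ ≤ 1 + r0 := by
          have := mem_closedBall_zero_iff.mp hx1
          linarith
  -- double ball contained in 2 • K
  set K2 : Set Y := (2 : ℂ) • K with hK2
  have hK2c : IsCompact K2 := hKc.smul (2 : ℂ)
  have hball2 : (M : Set Y) ∩ closedBall 0 2 ⊆ K2 := by
    rintro x ⟨hxM, hx2⟩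
    have h1 : ((2 : ℂ)⁻¹ • x) ∈ (M : Set Y) ∩ closedBall 0 1 := by
      refine ⟨M.smul_mem _ hxM, ?_⟩
      simp only [mem_closedBall, dist_zero_right, norm_smul]
      have : ‖x‖ ≤ 2 := mem_closedBall_zero_iff.mp hx2
      rw [norm_inv]
      simp only [Complex.norm_ofNat]
      linarith [this]
    have := hball h1
    refine ⟨(2 : ℂ)⁻¹ • x, this, ?_⟩
    simp [smul_smul]
  -- closure ball
  set N := M.topologicalClosure with hN
  have hNball : (N : Set Y) ∩ closedBall 0 1 ⊆ K2 := by
    have hsub : (N : Set Y) ∩ closedBall 0 1 ⊆ closure ((M : Set Y) ∩ closedBall 0 2) := by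
      rintro x ⟨hxN, hx1⟩
      obtain ⟨u, hu, hulim⟩ := mem_closure_iff_seq_limit.mp hxN
      refine mem_closure_of_tendsto hulim ?_
      have : ∀ᶠ n in Filter.atTop, ‖u n‖ ≤ 2 := by
        have hnorm : Filter.Tendsto (fun n => ‖u n‖) Filter.atTop (nhds ‖x‖) :=
          hulim.norm
        have hxlt : ‖x‖ < 2 := lt_of_le_of_lt (mem_closedBall_zero_iff.mp hx1) (by norm_num)
        filter_upwards [hnorm.eventually_lt_const hxlt] with n hn using hn.le
      filter_upwards [this] with n hn
      exact ⟨hu n, mem_closedBall_zero_iff.mpr hn⟩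
    refine hsub.trans ?_
    exact closure_minimal hball2 hK2c.isClosed
  have hNcompact : IsCompact ((N : Set Y) ∩ closedBall 0 1) :=
    hK2c.of_isClosed_subset (M.isClosed_topologicalClosure.inter Metric.isClosed_closedBall) hNball
  haveI : FiniteDimensional ℂ N := by
    refine FiniteDimensional.of_isCompact_closedBall₀ ℂ (r := 1) one_pos ?_
    rw [Topology.IsInducing.subtypeVal.isCompact_iff]
    convert hNcompact using 1
    ext y
    simp only [Set.mem_image, mem_closedBall, dist_zero_right, Set.mem_inter_iff]
    constructor
    · rintro ⟨⟨z, hz⟩, hn, rfl⟩; exact ⟨hz, by simpa using hn⟩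
    · rintro ⟨hy, hn⟩; exact ⟨⟨y, hy⟩, by simpa using hn, rfl⟩
  exact Submodule.finiteDimensional_of_le M.le_topologicalClosure
end
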